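/- Let X₁,...,X_b be indicator random variables that are negatively correlated, meaning ℙ(X_i = 1 for all i in S) ≤ ∏_{i∈S} ℙ(X_i = 1) for every subset S of indices, and let X = X₁+...+X_b. Then for every t ≥ 0, ℙ(X - 𝔼[X] > t) ≤ exp(-2t²/b). -/

import Mathlib

open Real

lemma hoeff_scalar (p : ℝ) (hp0 : 0 ≤ p) (hp1 : p ≤ 1) (c : ℝ) (hc : 0 ≤ c) :
    1 + (Real.exp c - 1) * p ≤ Real.exp (c * p + c ^ 2 / 8) := by
  set g : ℝ → ℝ := fun x => 1 - p + p * Real.exp x with hg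
  have hgpos : ∀ x, 0 < g x := by
    intro x
    have he := Real.exp_pos x
    simp only [hg]
    rcases hp0.eq_or_lt with h | h
    · simp [← h]
    · nlinarith [mul_pos h he]
  set F : ℝ → ℝ := fun x => x * p + x ^ 2 / 8 - Real.log (g x) with hF
  set F' : ℝ → ℝ := fun x => p + x / 4 - p * Real.exp x / g x with hF'
  have hgd : ∀ x, HasDerivAt g (p * Real.exp x) x := by
    intro x
    exact ((Real.hasDerivAt_exp x).const_mul p).const_add (1 - p)
  have hFd : ∀ x, HasDerivAt F (F' x) x := by
    intro x
    have h1 : HasDerivAt (fun x : ℝ => x * p) p x := hasDerivAt_mul_const p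
    have h2 : HasDerivAt (fun x : ℝ => x ^ 2 / 8) (x / 4) x := by
      have := (hasDerivAt_pow 2 x).div_const 8
      exact this.congr_deriv (by ring)
    have h3 : HasDerivAt (fun x => Real.log (g x)) (p * Real.exp x / g x) x :=
      (hgd x).log (hgpos x).ne'
    exact (h1.add h2).sub h3
  have hF'd : ∀ x, HasDerivAt F'
      (1 / 4 - (p * Real.exp x * g x - p * Real.exp x * (p * Real.exp x)) / g x ^ 2) x := by
    intro x
    have h1 : HasDerivAt (fun x : ℝ => p + x / 4) (1 / 4) x := by
      simpa using ((hasDerivAt_id x).div_const 4).const_add p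
    have h2 : HasDerivAt (fun x => p * Real.exp x) (p * Real.exp x) x :=
      (Real.hasDerivAt_exp x).const_mul p
    have h3 := h2.div (hgd x) (hgpos x).ne'
    exact h1.sub h3
  have hF''nonneg : ∀ x, 0 ≤ 1 / 4 - (p * Real.exp x * g x - p * Real.exp x * (p * Real.exp x)) / g x ^ 2 := by
    intro x
    have hG : 0 < g x := hgpos x
    have hE : 0 ≤ p * Real.exp x := by positivity
    rw [sub_nonneg, div_le_iff₀ (by positivity)]
    generalize g x = G at hG ⊢
    nlinarith [sq_nonneg (G - 2 * (p * Real.exp x))]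
  have hF'mono : Monotone F' := by
    apply monotone_of_deriv_nonneg
    · exact fun x => (hF'd x).differentiableAt
    · intro x
      rw [(hF'd x).deriv]
      exact hF''nonneg x
  have hF'0 : F' 0 = 0 := by simp [hF', hg]
  have hF'nonneg : ∀ x, 0 ≤ x → 0 ≤ F' x := by
    intro x hx
    rw [← hF'0]; exact hF'mono hx
  have hFmono : MonotoneOn F (Set.Ici (0:ℝ)) := by
    apply monotoneOn_of_deriv_nonneg (convex_Ici 0)
    · exact (fun x _ => (hFd x).differentiableAt.continuousAt.continuousWithinAt)
    · exact fun x _ => (hFd x).differentiableAt.differentiableWithinAt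
    · intro x hx
      rw [(hFd x).deriv]
      exact hF'nonneg x (le_of_lt (by simpa using hx))
  have hF0 : F 0 = 0 := by simp [hF, hg]
  have hFc : 0 ≤ F c := by
    rw [← hF0]
    exact hFmono Set.self_mem_Ici hc hc
  have hlog : Real.log (g c) ≤ c * p + c ^ 2 / 8 := by
    simp only [hF] at hFc; linarith
  have := Real.exp_le_exp.mpr hlog
  rw [Real.exp_log (hgpos c)] at this
  calc 1 + (Real.exp c - 1) * p = g c := by simp [hg]; ring
    _ ≤ _ := this

open MeasureTheory

theorem stmt_9 {Ω : Type*} [MeasurableSpace Ω] (μ : Measure Ω) [IsProbabilityMeasure μ]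
    (b : ℕ) (hb : 0 < b) (X : Fin b → Ω → ℝ)
    (hmeas : ∀ i, Measurable (X i))
    (h01 : ∀ i ω, X i ω = 0 ∨ X i ω = 1)
    (hneg : ∀ S : Finset (Fin b),
      μ {ω | ∀ i ∈ S, X i ω = 1} ≤ ∏ i ∈ S, μ {ω | X i ω = 1}) :
    ∀ t : ℝ, 0 ≤ t →
      μ {ω | (∑ i, X i ω) - (∑ i, ∫ x, X i x ∂μ) > t}
        ≤ ENNReal.ofReal (Real.exp (-2 * t ^ 2 / b)) := by
  classical
  intro t ht
  set p : Fin b → ℝ := fun i => (μ {ω | X i ω = 1}).toReal with hp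
  have hAmeas : ∀ i, MeasurableSet {ω | X i ω = 1} := fun i =>
    hmeas i (measurableSet_singleton 1)
  have hBmeas : ∀ T : Finset (Fin b), MeasurableSet {ω | ∀ i ∈ T, X i ω = 1} := by
    intro T
    have : {ω | ∀ i ∈ T, X i ω = 1} = ⋂ i ∈ T, {ω | X i ω = 1} := by
      ext ω; simp
    rw [this]
    exact MeasurableSet.biInter T.countable_toSet fun i _ => hAmeas i
  have hprodind : ∀ (T : Finset (Fin b)) ω,
      ∏ i ∈ T, X i ω = ({ω | ∀ i ∈ T, X i ω = 1} : Set Ω).indicator 1 ω := by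
    intro T ω
    by_cases h : ∀ i ∈ T, X i ω = 1
    · rw [Set.indicator_of_mem (show ω ∈ {ω | ∀ i ∈ T, X i ω = 1} from h)]
      simp [Finset.prod_eq_one h]
    · rw [Set.indicator_of_notMem (show ω ∉ {ω | ∀ i ∈ T, X i ω = 1} from h)]
      push_neg at h
      obtain ⟨i, hiT, hi⟩ := h
      have : X i ω = 0 := (h01 i ω).resolve_right hi
      exact Finset.prod_eq_zero hiT this
  have hTint : ∀ T : Finset (Fin b),
      ∫ ω, ∏ i ∈ T, X i ω ∂μ = (μ {ω | ∀ i ∈ T, X i ω = 1}).toReal := by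
    intro T
    rw [show (fun ω => ∏ i ∈ T, X i ω) = ({ω | ∀ i ∈ T, X i ω = 1} : Set Ω).indicator 1
      from funext (hprodind T)]
    exact integral_indicator_one (hBmeas T)
  have hint : ∀ i, ∫ x, X i x ∂μ = p i := by
    intro i
    have := hTint {i}
    simpa using this
  have hp0 : ∀ i, 0 ≤ p i := fun i => ENNReal.toReal_nonneg
  have hp1 : ∀ i, p i ≤ 1 := by
    intro i
    simpa using ENNReal.toReal_mono ENNReal.one_ne_top
      (prob_le_one (μ := μ) (s := {ω | X i ω = 1}))
  set c : ℝ := 4 * t / b with hcdef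
  have hc : 0 ≤ c := by positivity
  set d : ℝ := Real.exp c - 1 with hddef
  have hd : 0 ≤ d := by
    simp only [hddef, sub_nonneg]
    exact Real.one_le_exp hc
  set S : Ω → ℝ := fun ω => ∑ i, X i ω with hSdef
  set m : ℝ := ∑ i, p i with hmdef
  have hSmeas : Measurable S := Finset.measurable_sum _ fun i _ => hmeas i
  have hS0 : ∀ ω, 0 ≤ S ω :=
    fun ω => Finset.sum_nonneg fun i _ => by rcases h01 i ω with h | h <;> simp [h]
  have hSb : ∀ ω, S ω ≤ b := by
    intro ω
    calc S ω ≤ ∑ _i : Fin b, (1:ℝ) :=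
          Finset.sum_le_sum fun i _ => by rcases h01 i ω with h | h <;> simp [h]
      _ = b := by simp
  -- pointwise expansion
  have hpt : ∀ ω, Real.exp (c * S ω) = ∑ T ∈ (Finset.univ : Finset (Fin b)).powerset,
      d ^ T.card * ∏ i ∈ T, X i ω := by
    intro ω
    have h1 : Real.exp (c * S ω) = ∏ i, (1 + d * X i ω) := by
      rw [hSdef, Finset.mul_sum, Real.exp_sum]
      refine Finset.prod_congr rfl fun i _ => ?_
      rcases h01 i ω with h | h <;> simp [h, hddef]
    rw [h1]
    rw [show (fun i => (1:ℝ) + d * X i ω) = (fun i => d * X i ω + 1) from funext fun i => by ring]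
    rw [Finset.prod_add]
    refine Finset.sum_congr rfl fun T _ => ?_
    simp [Finset.prod_mul_distrib, Finset.prod_const, mul_comm]
  -- integrability of each term
  have hterm_int : ∀ T : Finset (Fin b),
      Integrable (fun ω => d ^ T.card * ∏ i ∈ T, X i ω) μ := by
    intro T
    have : Integrable (({ω | ∀ i ∈ T, X i ω = 1} : Set Ω).indicator (1 : Ω → ℝ)) μ :=
      (integrable_const (1:ℝ)).indicator (hBmeas T)
    have h2 : Integrable (fun ω => ∏ i ∈ T, X i ω) μ := by
      rw [show (fun ω => ∏ i ∈ T, X i ω) = ({ω | ∀ i ∈ T, X i ω = 1} : Set Ω).indicator 1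
        from funext (hprodind T)]
      exact this
    exact h2.const_mul _
  -- key MGF bound
  have key : ∫ ω, Real.exp (c * S ω) ∂μ ≤ Real.exp (c * m + b * c ^ 2 / 8) := by
    calc ∫ ω, Real.exp (c * S ω) ∂μ
        = ∑ T ∈ (Finset.univ : Finset (Fin b)).powerset,
            d ^ T.card * (μ {ω | ∀ i ∈ T, X i ω = 1}).toReal := by
          rw [show (fun ω => Real.exp (c * S ω)) = fun ω =>
            ∑ T ∈ (Finset.univ : Finset (Fin b)).powerset, d ^ T.card * ∏ i ∈ T, X i ω
            from funext hpt]
          rw [integral_finset_sum _ fun T _ => hterm_int T]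
          exact Finset.sum_congr rfl fun T _ => by
            rw [integral_const_mul, hTint]
      _ ≤ ∑ T ∈ (Finset.univ : Finset (Fin b)).powerset, d ^ T.card * ∏ i ∈ T, p i := by
          refine Finset.sum_le_sum fun T _ => ?_
          refine mul_le_mul_of_nonneg_left ?_ (pow_nonneg hd _)
          calc (μ {ω | ∀ i ∈ T, X i ω = 1}).toReal
              ≤ (∏ i ∈ T, μ {ω | X i ω = 1}).toReal :=
                ENNReal.toReal_mono (ENNReal.prod_ne_top fun i _ => measure_ne_top μ _)
                  (hneg T)
            _ = ∏ i ∈ T, p i := ENNReal.toReal_prod _ _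
      _ = ∏ i, (1 + d * p i) := by
          rw [show (fun i => (1:ℝ) + d * p i) = (fun i => d * p i + 1)
            from funext fun i => by ring]
          rw [Finset.prod_add]
          refine Finset.sum_congr rfl fun T _ => ?_
          simp [Finset.prod_mul_distrib, Finset.prod_const, mul_comm]
      _ ≤ ∏ i, Real.exp (c * p i + c ^ 2 / 8) := by
          refine Finset.prod_le_prod (fun i _ => by positivity) fun i _ => ?_
          have := hoeff_scalar (p i) (hp0 i) (hp1 i) c hc
          simpa [hddef, mul_comm] using this
      _ = Real.exp (∑ i, (c * p i + c ^ 2 / 8)) := (Real.exp_sum _ _).symm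
      _ = Real.exp (c * m + b * c ^ 2 / 8) := by
          congr 1
          rw [Finset.sum_add_distrib, Finset.sum_const, ← Finset.mul_sum]
          simp [hmdef]
          ring
  -- Markov / Chernoff
  set Y : Ω → ℝ := fun ω => S ω - m with hYdef
  have hYint : Integrable (fun ω => Real.exp (c * Y ω)) μ := by
    refine Integrable.mono' (integrable_const (Real.exp (c * (b - m))))
      ((((hSmeas.sub measurable_const).const_mul c).exp).aestronglyMeasurable) ?_
    filter_upwards with ω
    rw [Real.norm_eq_abs, abs_of_pos (Real.exp_pos _)]
    apply Real.exp_le_exp.mpr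
    apply mul_le_mul_of_nonneg_left _ hc
    simp only [hYdef]
    linarith [hSb ω]
  have hmgf : ProbabilityTheory.mgf Y μ c ≤ Real.exp (c * m + b * c ^ 2 / 8 - c * m) := by
    have : ProbabilityTheory.mgf Y μ c = (∫ ω, Real.exp (c * S ω) ∂μ) * Real.exp (-(c * m)) := by
      rw [ProbabilityTheory.mgf, ← integral_mul_const]
      refine integral_congr_ae (ae_of_all _ fun ω => ?_)
      show Real.exp (c * Y ω) = Real.exp (c * S ω) * Real.exp (-(c * m))
      rw [← Real.exp_add]
      congr 1
      simp only [hYdef]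
      ring
    rw [this, Real.exp_sub, Real.exp_neg, div_eq_mul_inv]
    exact mul_le_mul_of_nonneg_right key (by positivity)
  have hsubset : {ω | (∑ i, X i ω) - (∑ i, ∫ x, X i x ∂μ) > t} ⊆ {ω | t ≤ Y ω} := by
    intro ω hω
    simp only [Set.mem_setOf_eq] at hω ⊢
    have hm' : (∑ i, ∫ x, X i x ∂μ) = m := by
      rw [hmdef]; exact Finset.sum_congr rfl fun i _ => hint i
    simp only [hYdef, hSdef]
    rw [hm'] at hω
    linarith
  have hchern := ProbabilityTheory.measure_ge_le_exp_mul_mgf (μ := μ) (X := Y) (t := c) t hc hYint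
  have hfinal : (μ {ω | (∑ i, X i ω) - (∑ i, ∫ x, X i x ∂μ) > t}).toReal
      ≤ Real.exp (-2 * t ^ 2 / b) := by
    calc (μ {ω | (∑ i, X i ω) - (∑ i, ∫ x, X i x ∂μ) > t}).toReal
        ≤ (μ {ω | t ≤ Y ω}).toReal :=
          ENNReal.toReal_mono (measure_ne_top μ _) (measure_mono hsubset)
      _ ≤ Real.exp (-c * t) * ProbabilityTheory.mgf Y μ c := hchern
      _ ≤ Real.exp (-c * t) * Real.exp (c * m + b * c ^ 2 / 8 - c * m) :=
          mul_le_mul_of_nonneg_left hmgf (Real.exp_pos _).le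
      _ = Real.exp (b * c ^ 2 / 8 - c * t) := by rw [← Real.exp_add]; ring_nf
      _ = Real.exp (-2 * t ^ 2 / b) := by
          congr 1
          have hbne : (b:ℝ) ≠ 0 := Nat.cast_ne_zero.mpr hb.ne'
          rw [hcdef]
          field_simp
          ring
  calc μ {ω | (∑ i, X i ω) - (∑ i, ∫ x, X i x ∂μ) > t}
      = ENNReal.ofReal (μ {ω | (∑ i, X i ω) - (∑ i, ∫ x, X i x ∂μ) > t}).toReal :=
        (ENNReal.ofReal_toReal (measure_ne_top μ _)).symm
    _ ≤ ENNReal.ofReal (Real.exp (-2 * t ^ 2 / b)) := ENNReal.ofReal_le_ofReal hfinal
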